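/- For any classifier g, any trimming level α ∈ (0,1), any sample size n and any sample (Y_1,X_1),…,(Y_n,X_n), the empirical trimmed classification error satisfies R_{n,α}(g) = (R_n(g) − α)_+ / (1 − α). -/

import Mathlib

open MeasureTheory

noncomputable section

/-- Empirical classification error `R_n(g) = (1/n) Σ_i 1{g(X_i) ≠ Y_i}`. -/
def empErr {p : ℕ} (n : ℕ) (ξ : Fin n → Bool × (Fin p → ℝ))
    (g : (Fin p → ℝ) → Bool) : ℝ :=
  (1 / n) * ∑ i, if g (ξ i).2 ≠ (ξ i).1 then (1 : ℝ) else 0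

/-- Admissible trimming weight vectors: `0 ≤ w_i ≤ 1/(n(1-α))` and `Σ w_i = 1`. -/
def weightSet (n : ℕ) (α : ℝ) : Set (Fin n → ℝ) :=
  {w | (∀ i, 0 ≤ w i ∧ w i ≤ 1 / (n * (1 - α))) ∧ ∑ i, w i = 1}

/-- Empirical trimmed classification error
`R_{n,α}(g) = min_{w} Σ_i w_i 1{g(X_i) ≠ Y_i}`. -/
def empTrimmedErr {p : ℕ} (n : ℕ) (α : ℝ) (ξ : Fin n → Bool × (Fin p → ℝ))
    (g : (Fin p → ℝ) → Bool) : ℝ :=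
  sInf ((fun w => ∑ i, w i * (if g (ξ i).2 ≠ (ξ i).1 then (1 : ℝ) else 0)) ''
    weightSet n α)

/-- Corollary 1: `R_{n,α}(g) = (R_n(g) − α)_+ / (1 − α)`. -/
theorem empTrimmedErr_eq {p : ℕ} {n : ℕ} (hn : 0 < n) {α : ℝ}
    (hα : α ∈ Set.Ioo (0 : ℝ) 1) (ξ : Fin n → Bool × (Fin p → ℝ))
    {g : (Fin p → ℝ) → Bool} (hg : Measurable g) :
    empTrimmedErr n α ξ g = max (empErr n ξ g - α) 0 / (1 - α) := by
  classical
  obtain ⟨hα0, hα1⟩ := hα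
  have hn' : (0:ℝ) < n := by exact_mod_cast hn
  have h1α : (0:ℝ) < 1 - α := by linarith
  set c : ℝ := 1 / (n * (1 - α)) with hc
  have hcpos : 0 < c := by positivity
  set E : Finset (Fin n) := Finset.univ.filter (fun i => g (ξ i).2 ≠ (ξ i).1) with hE
  have hobj : ∀ w : Fin n → ℝ,
      ∑ i, w i * (if g (ξ i).2 ≠ (ξ i).1 then (1:ℝ) else 0) = ∑ i ∈ E, w i := by
    intro w
    rw [hE, Finset.sum_filter]
    apply Finset.sum_congr rfl
    intro i _
    by_cases h : g (ξ i).2 ≠ (ξ i).1 <;> simp [h]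
  have hkn : E.card ≤ n := by simpa using Finset.card_le_univ E
  have hjc : ((Eᶜ : Finset (Fin n)).card : ℝ) = n - E.card := by
    rw [Finset.card_compl, Fintype.card_fin, Nat.cast_sub hkn]
  have herr : empErr n ξ g = (E.card : ℝ) / n := by
    rw [empErr, Finset.sum_boole, hE]
    ring
  set k : ℝ := (E.card : ℝ) with hk
  set j : ℝ := ((Eᶜ : Finset (Fin n)).card : ℝ) with hj
  have hk0 : 0 ≤ k := by positivity
  have hj0 : 0 ≤ j := by positivity
  have hnc : (n : ℝ) * c = 1 / (1 - α) := by
    rw [hc]; field_simp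
  have h1nc : (1:ℝ) ≤ 1 / (1 - α) := by
    rw [le_div_iff₀ h1α]; linarith
  have hRHS : max (empErr n ξ g - α) 0 / (1 - α) = max (1 - j * c) 0 := by
    rw [herr, ← max_div_div_right h1α.le, zero_div]
    congr 1
    rw [hjc, hc]
    field_simp
    ring
  have hsE : ∀ a b : ℝ, ∑ i ∈ E, (if i ∈ E then a else b) = k * a := by
    intro a b
    rw [Finset.sum_congr rfl (fun i hi => if_pos hi), Finset.sum_const, nsmul_eq_mul]
  have hsEc : ∀ a b : ℝ, ∑ i ∈ Eᶜ, (if i ∈ E then a else b) = j * b := by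
    intro a b
    rw [Finset.sum_congr rfl (fun i hi => if_neg (Finset.mem_compl.mp hi)),
      Finset.sum_const, nsmul_eq_mul]
  have hwitness : ∃ w ∈ weightSet n α, ∑ i ∈ E, w i = max (1 - j * c) 0 := by
    by_cases h : 1 ≤ j * c
    · -- case A : minimum 0
      have hjpos : 0 < j := by nlinarith
      have h1j : (1:ℝ) / j ≤ c := by
        rw [div_le_iff₀ hjpos]; linarith
      refine ⟨fun i => if i ∈ E then 0 else 1 / j, ⟨fun i => ?_, ?_⟩, ?_⟩
      · dsimp only
        constructor
        · by_cases hi : i ∈ E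
          · rw [if_pos hi]
          · rw [if_neg hi]; positivity
        · show _ ≤ c
          by_cases hi : i ∈ E
          · rw [if_pos hi]; exact hcpos.le
          · rw [if_neg hi]; exact h1j
      · rw [← Finset.sum_add_sum_compl E, hsE, hsEc]
        field_simp
        ring
      · rw [hsE, max_eq_right (by linarith)]
        ring
    · -- case B : minimum 1 - j*c > 0
      push_neg at h
      have hkpos : 0 < k := by
        rcases lt_or_ge 0 k with h' | h'
        · exact h'
        · exfalso
          have hk0' : k = 0 := le_antisymm h' hk0
          have hjn : j = (n : ℝ) := by rw [hjc, hk0']; ring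
          rw [hjn, hnc] at h
          linarith
      have hsum : k + j = (n : ℝ) := by rw [hjc]; ring
      have hle : (1 - j * c) / k ≤ c := by
        rw [div_le_iff₀ hkpos]
        nlinarith [hnc, hsum]
      refine ⟨fun i => if i ∈ E then (1 - j * c) / k else c, ⟨fun i => ?_, ?_⟩, ?_⟩
      · dsimp only
        constructor
        · by_cases hi : i ∈ E
          · rw [if_pos hi]; exact div_nonneg (by linarith) hk0
          · rw [if_neg hi]; exact hcpos.le
        · show _ ≤ c
          by_cases hi : i ∈ E
          · rw [if_pos hi]; exact hle
          · rw [if_neg hi]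
      · rw [← Finset.sum_add_sum_compl E, hsE, hsEc]
        field_simp
        ring
      · rw [hsE, max_eq_left (by linarith)]
        field_simp
  obtain ⟨w₀, hw₀, hw₀v⟩ := hwitness
  rw [empTrimmedErr, hRHS]
  apply le_antisymm
  · apply csInf_le
    · refine ⟨0, fun x hx => ?_⟩
      obtain ⟨w, hw, rfl⟩ := hx
      simp only [hobj]
      exact Finset.sum_nonneg fun i _ => (hw.1 i).1
    · exact ⟨w₀, hw₀, by simp only [hobj]; exact hw₀v⟩
  · apply le_csInf
    · exact ⟨_, w₀, hw₀, rfl⟩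
    · rintro b ⟨w, hw, rfl⟩
      simp only [hobj]
      apply max_le
      · have h1 : ∑ i ∈ Eᶜ, w i ≤ j * c := by
          calc ∑ i ∈ Eᶜ, w i ≤ ∑ _i ∈ Eᶜ, c := Finset.sum_le_sum fun i _ => (hw.1 i).2
          _ = j * c := by rw [Finset.sum_const, nsmul_eq_mul]
        have h2 : ∑ i ∈ E, w i + ∑ i ∈ Eᶜ, w i = 1 := by
          rw [Finset.sum_add_sum_compl]; exact hw.2
        linarith
      · exact Finset.sum_nonneg fun i _ => (hw.1 i).1

end
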